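/- If a homeomorphism f of a compact metric space has the L-shadowing property and is expansive, then it is asymptotically expansive; conversely, under L-shadowing, asymptotic expansiveness implies expansiveness. In particular a homeomorphism with the shadowing property and an expansive non-wandering set that is not expansive on the whole space is not asymptotically expansive and does not have uniform contractions on its local stable/unstable sets. -/
import Mathlib


open Topology Filter Metric TopologicalSpace

namespace LS

variable {X Y : Type*} [MetricSpace X] [MetricSpace Y]

/-- finite forward iterates of a homeomorphism -/
def hpowAux (f : X ≃ₜ X) : ℕ → X ≃ₜ X
  | 0 => Homeomorph.refl X
  | n+1 => (hpowAux f n).trans f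

/-- `ℤ`-iterates of a homeomorphism: `hpow f k` is the `k`-th iterate `f^k`. -/
def hpow (f : X ≃ₜ X) : ℤ → X ≃ₜ X
  | Int.ofNat n => hpowAux f n
  | Int.negSucc n => (hpowAux f (n+1)).symm

/-- the `ℤ`-iteration map of `f` -/
def F (f : X ≃ₜ X) : ℤ → X → X := fun k => hpow f k

/-- δ-limit-pseudo-orbit for a system given by its iterate family `T` -/
def IsLimitPseudoOrbit (T : ℤ → Y → Y) (δ : ℝ) (x : ℤ → Y) : Prop :=
  (∀ k : ℤ, dist (T 1 (x k)) (x (k+1)) ≤ δ) ∧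
  Tendsto (fun k : ℤ => dist (T 1 (x k)) (x (k+1))) (cocompact ℤ) (𝓝 0)

/-- `z` ε-limit-shadows the sequence `x` -/
def LimitShadows (T : ℤ → Y → Y) (ε : ℝ) (x : ℤ → Y) (z : Y) : Prop :=
  (∀ k : ℤ, dist (T k z) (x k) ≤ ε) ∧
  Tendsto (fun k : ℤ => dist (T k z) (x k)) (cocompact ℤ) (𝓝 0)

/-- the L-shadowing property -/
def LShadowing (T : ℤ → Y → Y) : Prop :=
  ∀ ε > (0:ℝ), ∃ δ > (0:ℝ), ∀ x : ℤ → Y, IsLimitPseudoOrbit T δ x → ∃ z, LimitShadows T ε x z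

/-- the shadowing property -/
def Shadowing (T : ℤ → Y → Y) : Prop :=
  ∀ ε > (0:ℝ), ∃ δ > (0:ℝ), ∀ x : ℤ → Y,
    (∀ k : ℤ, dist (T 1 (x k)) (x (k+1)) < δ) → ∃ z, ∀ k : ℤ, dist (T k z) (x k) < ε

/-- local c-stable set -/
def Ws (f : X ≃ₜ X) (c : ℝ) (x : X) : Set X :=
  {y | ∀ k : ℤ, 0 ≤ k → dist (F f k y) (F f k x) ≤ c}

/-- local c-unstable set -/
def Wu (f : X ≃ₜ X) (c : ℝ) (x : X) : Set X :=
  {y | ∀ k : ℤ, k ≤ 0 → dist (F f k y) (F f k x) ≤ c}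

/-- stable set -/
def WsA (f : X ≃ₜ X) (x : X) : Set X :=
  {y | Tendsto (fun k : ℤ => dist (F f k y) (F f k x)) atTop (𝓝 0)}

/-- unstable set -/
def WuA (f : X ≃ₜ X) (x : X) : Set X :=
  {y | Tendsto (fun k : ℤ => dist (F f k y) (F f k x)) atBot (𝓝 0)}

/-- asymptotic local stable set -/
def Vs (f : X ≃ₜ X) (c : ℝ) (x : X) : Set X := WsA f x ∩ Ws f c x

/-- asymptotic local unstable set -/
def Vu (f : X ≃ₜ X) (c : ℝ) (x : X) : Set X := WuA f x ∩ Wu f c x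

/-- image of a nonempty compact set under a homeomorphism -/
def himg (f : X ≃ₜ X) (A : NonemptyCompacts X) : NonemptyCompacts X :=
  ⟨⟨f '' A, A.isCompact.image f.continuous⟩, A.nonempty.image f⟩

/-- the `ℤ`-iteration family of the induced hyperspace map `2^f` -/
def HF (f : X ≃ₜ X) : ℤ → NonemptyCompacts X → NonemptyCompacts X :=
  fun k A => himg (hpow f k) A

end LS

/-- the non-wandering set of `f` -/
def LS.Omega {X : Type*} [MetricSpace X] (f : X ≃ₜ X) : Set X :=
  {x | ∀ η > (0:ℝ), ∃ y : X, dist x y < η ∧ ∃ n : ℕ, 0 < n ∧ dist (LS.F f n y) x < η}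

/-- uniform contractions on local stable/unstable sets -/
def LS.UnifContr {X : Type*} [MetricSpace X] (f : X ≃ₜ X) : Prop :=
  ∃ ε > (0:ℝ), ∀ r > (0:ℝ), ∃ k : ℕ, ∀ x : X, ∀ n : ℕ, k ≤ n →
    (LS.F f n '' LS.Ws f ε x ⊆ LS.Ws f r (LS.F f n x)) ∧
    (LS.F f (-(n:ℤ)) '' LS.Wu f ε x ⊆ LS.Wu f r (LS.F f (-(n:ℤ)) x))


namespace LS

section Aux

variable {X : Type*} [MetricSpace X]

lemma hpowAux_toEquiv (f : X ≃ₜ X) : ∀ n : ℕ, (hpowAux f n).toEquiv = f.toEquiv ^ n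
  | 0 => rfl
  | (n+1) => by
    ext x
    calc (hpowAux f (n+1)).toEquiv x = f ((hpowAux f n).toEquiv x) := rfl
    _ = f ((f.toEquiv ^ n) x) := by rw [hpowAux_toEquiv f n]
    _ = (f.toEquiv ^ (n+1)) x := by rw [pow_succ']; simp [Equiv.Perm.mul_apply]

lemma F_def (f : X ≃ₜ X) (k : ℤ) (x : X) : F f k x = (f.toEquiv ^ k) x := by
  cases k with
  | ofNat n =>
    have h1 : (f.toEquiv ^ (Int.ofNat n)) = f.toEquiv ^ n := zpow_natCast _ n
    rw [h1, ← hpowAux_toEquiv f n]; rfl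
  | negSucc n =>
    rw [zpow_negSucc, ← hpowAux_toEquiv f (n+1)]; rfl

lemma F_add (f : X ≃ₜ X) (a b : ℤ) (x : X) : F f (a + b) x = F f a (F f b x) := by
  rw [F_def, F_def, F_def, zpow_add, Equiv.Perm.mul_apply]

lemma F_zero (f : X ≃ₜ X) (x : X) : F f 0 x = x := by simp [F_def]

lemma F_cont (f : X ≃ₜ X) (k : ℤ) : Continuous (F f k) := (hpow f k).continuous

lemma F_symm (f : X ≃ₜ X) (k : ℤ) (x : X) : F f.symm k x = F f (-k) x := by
  rw [F_def, F_def]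
  have h1 : f.symm.toEquiv = (f.toEquiv)⁻¹ := rfl
  rw [h1, inv_zpow, ← zpow_neg]

lemma mem_Omega (f : X ≃ₜ X) {x p : X}
    (h : ∀ η > (0:ℝ), ∃ a b : ℤ, a < b ∧ dist (F f a x) p < η ∧ dist (F f b x) p < η) :
    p ∈ Omega f := by
  intro η hη
  obtain ⟨a, b, hab, ha, hb⟩ := h η hη
  refine ⟨F f a x, by rwa [dist_comm], (b - a).toNat, by omega, ?_⟩
  have hn : (((b - a).toNat : ℤ)) + a = b := by omega
  calc dist (F f ((b-a).toNat : ℤ) (F f a x)) p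
      = dist (F f b x) p := by rw [← F_add, hn]
    _ < η := hb

lemma omega_of_tendsto_times (f : X ≃ₜ X) {x p : X} {t : ℕ → ℤ}
    (ht : Tendsto t atTop atTop)
    (hconv : Tendsto (fun n => F f (t n) x) atTop (𝓝 p)) : p ∈ Omega f := by
  apply mem_Omega f
  intro η hη
  have h1 : ∀ᶠ n in atTop, dist (F f (t n) x) p < η := (Metric.tendsto_nhds.mp hconv) η hη
  obtain ⟨N, hN⟩ := eventually_atTop.mp h1
  obtain ⟨M, hM⟩ := eventually_atTop.mp (ht.eventually_gt_atTop (t N))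
  exact ⟨t N, t (max N M), hM _ (le_max_right _ _), hN _ le_rfl, hN _ (le_max_left _ _)⟩

lemma mem_Omega_symm {f : X ≃ₜ X} {p : X} (hp : p ∈ Omega f) : p ∈ Omega f.symm := by
  intro η hη
  obtain ⟨y, hy, n, hn, hret⟩ := hp η hη
  refine ⟨F f n y, by rwa [dist_comm], n, hn, ?_⟩
  have h1 : F f.symm (n:ℤ) (F f (n:ℤ) y) = y := by
    rw [F_symm, ← F_add]
    simp [F_zero]
  rw [h1, dist_comm]
  exact hy

lemma mem_Omega_of_symm {f : X ≃ₜ X} {p : X} (hp : p ∈ Omega f.symm) : p ∈ Omega f := by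
  have := mem_Omega_symm hp
  rwa [Homeomorph.symm_symm] at this

variable [CompactSpace X]

lemma orbitdist_tendsto_atTop (f : X ≃ₜ X) {x y : X} {c c₀ : ℝ} (hcc : c ≤ c₀)
    (h : ∀ k : ℤ, dist (F f k y) (F f k x) ≤ c)
    (hEΩ : ∀ p ∈ Omega f, ∀ q ∈ Omega f, (∀ k : ℤ, dist (F f k q) (F f k p) ≤ c₀) → q = p) :
    Tendsto (fun k : ℤ => dist (F f k y) (F f k x)) atTop (𝓝 0) := by
  by_contra hcon
  rw [Metric.tendsto_atTop] at hcon
  push_neg at hcon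
  obtain ⟨η, hη, hfreq⟩ := hcon
  choose t ht1 ht2 using hfreq
  set s : ℕ → ℤ := fun n => t (n : ℤ) with hs_def
  have hs : Tendsto s atTop atTop :=
    tendsto_atTop_mono (fun n => ht1 (n : ℤ)) tendsto_natCast_atTop_atTop
  obtain ⟨q, -, φ, hφ, hq⟩ := IsCompact.tendsto_subseq
    (x := fun n => F f (s n) y) isCompact_univ (fun n => Set.mem_univ _)
  obtain ⟨p, -, ψ, hψ, hp⟩ := IsCompact.tendsto_subseq
    (x := fun n => F f (s (φ n)) x) isCompact_univ (fun n => Set.mem_univ _)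
  set u : ℕ → ℤ := fun n => s (φ (ψ n)) with hu_def
  have hq2 : Tendsto (fun n => F f (u n) y) atTop (𝓝 q) := hq.comp hψ.tendsto_atTop
  have hp2 : Tendsto (fun n => F f (u n) x) atTop (𝓝 p) := hp
  have hu : Tendsto u atTop atTop := hs.comp ((hφ.comp hψ).tendsto_atTop)
  have hΩq : q ∈ Omega f := omega_of_tendsto_times f hu hq2
  have hΩp : p ∈ Omega f := omega_of_tendsto_times f hu hp2
  have horb : ∀ m : ℤ, dist (F f m q) (F f m p) ≤ c₀ := by
    intro m
    have hconv : Tendsto (fun n => dist (F f m (F f (u n) y)) (F f m (F f (u n) x))) atTop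
        (𝓝 (dist (F f m q) (F f m p))) :=
      (((F_cont f m).tendsto q).comp hq2).dist (((F_cont f m).tendsto p).comp hp2)
    apply le_of_tendsto hconv
    filter_upwards with n
    rw [← F_add, ← F_add]
    exact (h _).trans hcc
  have hqp := hEΩ p hΩp q hΩq horb
  have hdist : η ≤ dist q p := by
    have hconv : Tendsto (fun n => dist (F f (u n) y) (F f (u n) x)) atTop (𝓝 (dist q p)) :=
      hq2.dist hp2
    apply ge_of_tendsto hconv
    filter_upwards with n
    have h2 := ht2 ((φ (ψ n) : ℕ) : ℤ)
    rw [Real.dist_0_eq_abs, abs_of_nonneg dist_nonneg] at h2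
    exact h2
  rw [hqp] at hdist
  simp at hdist
  linarith

lemma orbitdist_tendsto_atBot (f : X ≃ₜ X) {x y : X} {c c₀ : ℝ} (hcc : c ≤ c₀)
    (h : ∀ k : ℤ, dist (F f k y) (F f k x) ≤ c)
    (hEΩ : ∀ p ∈ Omega f, ∀ q ∈ Omega f, (∀ k : ℤ, dist (F f k q) (F f k p) ≤ c₀) → q = p) :
    Tendsto (fun k : ℤ => dist (F f k y) (F f k x)) atBot (𝓝 0) := by
  have h' : ∀ k : ℤ, dist (F f.symm k y) (F f.symm k x) ≤ c := fun k => by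
    rw [F_symm, F_symm]; exact h (-k)
  have hEΩ' : ∀ p ∈ Omega f.symm, ∀ q ∈ Omega f.symm,
      (∀ k : ℤ, dist (F f.symm k q) (F f.symm k p) ≤ c₀) → q = p := by
    intro p hp q hq hd
    refine hEΩ p (mem_Omega_of_symm hp) q (mem_Omega_of_symm hq) (fun k => ?_)
    have h3 := hd (-k)
    rwa [F_symm, F_symm, neg_neg] at h3
  have H := orbitdist_tendsto_atTop f.symm hcc h' hEΩ'
  have H2 : Tendsto (fun k : ℤ => dist (F f (-k) y) (F f (-k) x)) atTop (𝓝 0) := by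
    simpa only [F_symm] using H
  have H3 := H2.comp (tendsto_neg_atBot_atTop : Tendsto (fun k : ℤ => -k) atBot atTop)
  simpa only [Function.comp_def, neg_neg] using H3

omit [CompactSpace X] in
lemma E_of_UnifContr (f : X ≃ₜ X) (h : UnifContr f) :
    ∃ c > (0:ℝ), ∀ x : X, Ws f c x ∩ Wu f c x = {x} := by
  obtain ⟨ε, hε, hP⟩ := h
  refine ⟨ε, hε, fun x => ?_⟩
  apply Set.eq_singleton_iff_unique_mem.mpr
  constructor
  · exact ⟨fun k _ => by simp [dist_self, le_of_lt hε], fun k _ => by simp [dist_self, le_of_lt hε]⟩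
  · rintro y ⟨hys, hyu⟩
    have hall : ∀ k : ℤ, dist (F f k y) (F f k x) ≤ ε := fun k => by
      rcases le_total 0 k with hk | hk
      · exact hys k hk
      · exact hyu k hk
    have key : ∀ r > (0:ℝ), dist y x ≤ r := by
      intro r hr
      obtain ⟨K, hK⟩ := hP r hr
      have h2 := (hK (F f (K:ℤ) x) K le_rfl).2
      have hmem : F f (K:ℤ) y ∈ Wu f ε (F f (K:ℤ) x) := by
        intro j _
        have h3 := hall (j + K)
        rwa [F_add, F_add] at h3
      have himg : F f (-(K:ℤ)) (F f (K:ℤ) y) ∈ Wu f r (F f (-(K:ℤ)) (F f (K:ℤ) x)) :=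
        h2 ⟨_, hmem, rfl⟩
      have hy' : F f (-(K:ℤ)) (F f (K:ℤ) y) = y := by rw [← F_add]; simp [F_zero]
      have hx' : F f (-(K:ℤ)) (F f (K:ℤ) x) = x := by rw [← F_add]; simp [F_zero]
      rw [hy', hx'] at himg
      have h4 := himg 0 le_rfl
      rwa [F_zero, F_zero] at h4
    by_contra hne
    have hpos : 0 < dist y x := dist_pos.mpr hne
    have h5 := key (dist y x / 2) (by linarith)
    linarith

omit [CompactSpace X] in
lemma mem_self_WsWu (f : X ≃ₜ X) {c : ℝ} (hc : 0 ≤ c) (x : X) : x ∈ Ws f c x ∩ Wu f c x :=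
  ⟨fun k _ => by simp [dist_self, hc], fun k _ => by simp [dist_self, hc]⟩

omit [CompactSpace X] in
lemma mem_self_VsVu (f : X ≃ₜ X) {c : ℝ} (hc : 0 ≤ c) (x : X) : x ∈ Vs f c x ∩ Vu f c x := by
  have h0s : Tendsto (fun k : ℤ => dist (F f k x) (F f k x)) atTop (𝓝 0) := by
    simp only [dist_self]; exact tendsto_const_nhds
  have h0u : Tendsto (fun k : ℤ => dist (F f k x) (F f k x)) atBot (𝓝 0) := by
    simp only [dist_self]; exact tendsto_const_nhds
  exact ⟨⟨h0s, fun k _ => by simp [dist_self, hc]⟩, ⟨h0u, fun k _ => by simp [dist_self, hc]⟩⟩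

lemma F_succ (f : X ≃ₜ X) (k : ℤ) (x : X) : F f 1 (F f k x) = F f (k+1) x := by
  rw [← F_add]; congr 1; omega

-- (U): uniqueness from asymptotic expansiveness
lemma AE_unique (f : X ≃ₜ X) {ε : ℝ} (hAE : ∀ x : X, Vs f ε x ∩ Vu f ε x = {x})
    {u v : X} (hsup : ∀ k : ℤ, dist (F f k u) (F f k v) ≤ ε)
    (hs : Tendsto (fun k : ℤ => dist (F f k u) (F f k v)) atTop (𝓝 0))
    (hu : Tendsto (fun k : ℤ => dist (F f k u) (F f k v)) atBot (𝓝 0)) : u = v := by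
  have hmem : u ∈ Vs f ε v ∩ Vu f ε v :=
    ⟨⟨hs, fun k _ => hsup k⟩, ⟨hu, fun k _ => hsup k⟩⟩
  rw [hAE v] at hmem
  exact hmem

-- triangle squeeze
lemma tendsto_dist_zero_trans {l : Filter ℤ} {a m b : ℤ → X}
    (h1 : Tendsto (fun k => dist (a k) (m k)) l (𝓝 0))
    (h2 : Tendsto (fun k => dist (m k) (b k)) l (𝓝 0)) :
    Tendsto (fun k => dist (a k) (b k)) l (𝓝 0) := by
  apply squeeze_zero' (Eventually.of_forall fun k => dist_nonneg)
    (Eventually.of_forall fun k => dist_triangle (a k) (m k) (b k))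
  simpa using h1.add h2

lemma ev_le_of_tendsto_zero {u : ℤ → ℝ} {l : Filter ℤ} (h : Tendsto u l (𝓝 0)) {η : ℝ}
    (hη : 0 < η) : ∀ᶠ k in l, u k ≤ η := by
  have h2 : u ⁻¹' Set.Iic η ∈ l := h (Iic_mem_nhds hη)
  filter_upwards [h2] with k hk using hk

lemma atBot_le_cocompact : (atBot : Filter ℤ) ≤ cocompact ℤ := by
  rw [cocompact_eq_atBot_atTop]; exact le_sup_left
lemma atTop_le_cocompact : (atTop : Filter ℤ) ≤ cocompact ℤ := by
  rw [cocompact_eq_atBot_atTop]; exact le_sup_right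

/-- Shadowing of the pseudo-orbit obtained by gluing the past orbit of `u` (up to time `T`)
with the future orbit of `v`. -/
lemma glue_shadow (f : X ≃ₜ X) {ρ δ : ℝ} (hδ : 0 ≤ δ)
    (hLρ : ∀ w : ℤ → X, IsLimitPseudoOrbit (F f) δ w → ∃ z, LimitShadows (F f) ρ w z)
    (u v : X) (T : ℤ) (hjump : dist (F f (T+1) u) (F f (T+1) v) ≤ δ) :
    ∃ z : X, (∀ k : ℤ, k ≤ T → dist (F f k z) (F f k u) ≤ ρ) ∧
      (∀ k : ℤ, T < k → dist (F f k z) (F f k v) ≤ ρ) ∧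
      Tendsto (fun k : ℤ => dist (F f k z) (F f k u)) atBot (𝓝 0) ∧
      Tendsto (fun k : ℤ => dist (F f k z) (F f k v)) atTop (𝓝 0) := by
  set W : ℤ → X := fun k => if k ≤ T then F f k u else F f k v with hW
  have hWle : ∀ k : ℤ, k ≤ T → W k = F f k u := fun k hk => if_pos hk
  have hWgt : ∀ k : ℤ, T < k → W k = F f k v := fun k hk => if_neg (not_le.mpr hk)
  have hjump0 : ∀ k : ℤ, k ≠ T → dist (F f 1 (W k)) (W (k+1)) = 0 := by
    intro k hk
    rcases lt_or_gt_of_ne hk with hk' | hk'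
    · rw [hWle k (by omega), hWle (k+1) (by omega), F_succ, dist_self]
    · rw [hWgt k (by omega), hWgt (k+1) (by omega), F_succ, dist_self]
  have hpo : IsLimitPseudoOrbit (F f) δ W := by
    constructor
    · intro k
      by_cases hk : k = T
      · rw [hk, hWle T le_rfl, hWgt (T+1) (by omega), F_succ]
        exact hjump
      · rw [hjump0 k hk]; exact hδ
    · have hev : ∀ᶠ k in cocompact ℤ, dist (F f 1 (W k)) (W (k+1)) = 0 := by
        have hfin : ({T} : Set ℤ).Finite := Set.finite_singleton T
        filter_upwards [hfin.isCompact.compl_mem_cocompact] with k hk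
        exact hjump0 k (by simpa using hk)
      exact Tendsto.congr' (hev.mono fun k hk => hk.symm) tendsto_const_nhds
  obtain ⟨z, hz1, hz2⟩ := hLρ W hpo
  refine ⟨z, fun k hk => ?_, fun k hk => ?_, ?_, ?_⟩
  · have h3 := hz1 k; rwa [hWle k hk] at h3
  · have h3 := hz1 k; rwa [hWgt k hk] at h3
  · have hb : Tendsto (fun k : ℤ => dist (F f k z) (W k)) atBot (𝓝 0) :=
      hz2.mono_left atBot_le_cocompact
    apply hb.congr'
    filter_upwards [eventually_le_atBot T] with k hk
    rw [hWle k hk]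
  · have ht : Tendsto (fun k : ℤ => dist (F f k z) (W k)) atTop (𝓝 0) :=
      hz2.mono_left atTop_le_cocompact
    apply ht.congr'
    filter_upwards [eventually_gt_atTop T] with k hk
    rw [hWgt k hk]


/-- If orbit distances are bounded by `c` and frequently small in the future, then under
L-shadowing and asymptotic expansiveness the pair is forward asymptotic. -/
lemma asymp_of_freq_small_top (f : X ≃ₜ X) {ε : ℝ} (hε : 0 < ε)
    (hAE : ∀ x : X, Vs f ε x ∩ Vu f ε x = {x})
    (δf : ℝ → ℝ) (hδf : ∀ ρ, 0 < ρ → 0 < δf ρ)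
    (hshad : ∀ ρ, 0 < ρ → ∀ w : ℤ → X, IsLimitPseudoOrbit (F f) (δf ρ) w →
      ∃ z, LimitShadows (F f) ρ w z)
    {x y : X} {c : ℝ} (hc : 0 < c) (hcε : c ≤ ε/8)
    (h : ∀ k : ℤ, dist (F f k y) (F f k x) ≤ c)
    (hfs : ∀ γ, 0 < γ → ∀ K : ℤ, ∃ k : ℤ, K ≤ k ∧ dist (F f k y) (F f k x) ≤ γ) :
    Tendsto (fun k : ℤ => dist (F f k y) (F f k x)) atTop (𝓝 0) := by
  set ρ' : ℕ → ℝ := fun m => min (ε/8) (1/(m+1)) with hρ'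
  have hρ'pos : ∀ m : ℕ, 0 < ρ' m := fun m => lt_min (by linarith) (by positivity)
  have hρ'le : ∀ m : ℕ, ρ' m ≤ ε/8 := fun m => min_le_left _ _
  have hρ'le2 : ∀ m : ℕ, ρ' m ≤ 1/(m+1) := fun m => min_le_right _ _
  have hchoice : ∀ m : ℕ, ∃ z : X, (∃ N : ℤ, (m : ℤ) ≤ N ∧
      (∀ k : ℤ, k ≤ N → dist (F f k z) (F f k y) ≤ ρ' m) ∧
      (∀ k : ℤ, N < k → dist (F f k z) (F f k x) ≤ ρ' m)) ∧
      Tendsto (fun k : ℤ => dist (F f k z) (F f k y)) atBot (𝓝 0) ∧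
      Tendsto (fun k : ℤ => dist (F f k z) (F f k x)) atTop (𝓝 0) := by
    intro m
    obtain ⟨k₀, hk₀, hk₀d⟩ := hfs (δf (ρ' m)) (hδf _ (hρ'pos m)) ((m:ℤ)+1)
    have hj : dist (F f ((k₀-1)+1) y) (F f ((k₀-1)+1) x) ≤ δf (ρ' m) := by
      have he : k₀ - 1 + 1 = k₀ := by ring
      rw [he]; exact hk₀d
    obtain ⟨z, hz1, hz2, hz3, hz4⟩ := glue_shadow f (le_of_lt (hδf _ (hρ'pos m)))
      (hshad _ (hρ'pos m)) y x (k₀ - 1) hj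
    exact ⟨z, ⟨k₀ - 1, by omega, hz1, hz2⟩, hz3, hz4⟩
  choose zf hNf hzb hzt using hchoice
  have hall : ∀ m : ℕ, ∀ k : ℤ, dist (F f k (zf m)) (F f k y) ≤ ρ' m + c := by
    intro m k
    obtain ⟨N, hN, h1, h2⟩ := hNf m
    rcases le_or_gt k N with hk | hk
    · have h3 := h1 k hk; linarith
    · calc dist (F f k (zf m)) (F f k y)
          ≤ dist (F f k (zf m)) (F f k x) + dist (F f k x) (F f k y) := dist_triangle _ _ _
        _ ≤ ρ' m + c := add_le_add (h2 k hk) (by rw [dist_comm]; exact h k)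
  have heq : ∀ m : ℕ, zf m = zf 0 := by
    intro m
    apply AE_unique f hAE
    · intro k
      calc dist (F f k (zf m)) (F f k (zf 0))
          ≤ dist (F f k (zf m)) (F f k y) + dist (F f k y) (F f k (zf 0)) := dist_triangle _ _ _
        _ ≤ (ρ' m + c) + (ρ' 0 + c) := by
            refine add_le_add (hall m k) ?_
            rw [dist_comm]; exact hall 0 k
        _ ≤ ε := by have h1 := hρ'le m; have h2 := hρ'le 0; linarith
    · exact tendsto_dist_zero_trans (hzt m) ((hzt 0).congr (fun k => dist_comm _ _))
    · exact tendsto_dist_zero_trans (hzb m) ((hzb 0).congr (fun k => dist_comm _ _))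
  have hy : zf 0 = y := by
    refine eq_of_dist_eq_zero ?_
    have key : ∀ k : ℤ, dist (F f k (zf 0)) (F f k y) = 0 := by
      intro k
      have hup : ∀ᶠ m : ℕ in atTop, dist (F f k (zf 0)) (F f k y) ≤ 1/(m+1) := by
        rw [eventually_atTop]
        refine ⟨k.toNat, fun m hm => ?_⟩
        obtain ⟨N, hN, h1, h2⟩ := hNf m
        have hkN : k ≤ N := by omega
        have h3 := h1 k hkN
        rw [heq m] at h3
        exact h3.trans (hρ'le2 m)
      have h0 : dist (F f k (zf 0)) (F f k y) ≤ 0 :=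
        ge_of_tendsto tendsto_one_div_add_atTop_nhds_zero_nat hup
      exact le_antisymm h0 dist_nonneg
    have h4 := key 0
    rwa [F_zero, F_zero] at h4
  rw [← hy]
  exact hzt 0

/-- Backward version. -/
lemma asymp_of_freq_small_bot (f : X ≃ₜ X) {ε : ℝ} (hε : 0 < ε)
    (hAE : ∀ x : X, Vs f ε x ∩ Vu f ε x = {x})
    (δf : ℝ → ℝ) (hδf : ∀ ρ, 0 < ρ → 0 < δf ρ)
    (hshad : ∀ ρ, 0 < ρ → ∀ w : ℤ → X, IsLimitPseudoOrbit (F f) (δf ρ) w →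
      ∃ z, LimitShadows (F f) ρ w z)
    {x y : X} {c : ℝ} (hc : 0 < c) (hcε : c ≤ ε/8)
    (h : ∀ k : ℤ, dist (F f k y) (F f k x) ≤ c)
    (hfs : ∀ γ, 0 < γ → ∀ K : ℤ, ∃ k : ℤ, k ≤ K ∧ dist (F f k y) (F f k x) ≤ γ) :
    Tendsto (fun k : ℤ => dist (F f k y) (F f k x)) atBot (𝓝 0) := by
  set ρ' : ℕ → ℝ := fun m => min (ε/8) (1/(m+1)) with hρ'
  have hρ'pos : ∀ m : ℕ, 0 < ρ' m := fun m => lt_min (by linarith) (by positivity)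
  have hρ'le : ∀ m : ℕ, ρ' m ≤ ε/8 := fun m => min_le_left _ _
  have hρ'le2 : ∀ m : ℕ, ρ' m ≤ 1/(m+1) := fun m => min_le_right _ _
  have hchoice : ∀ m : ℕ, ∃ z : X, (∃ N : ℤ, N ≤ -(m : ℤ) ∧
      (∀ k : ℤ, k ≤ N → dist (F f k z) (F f k x) ≤ ρ' m) ∧
      (∀ k : ℤ, N < k → dist (F f k z) (F f k y) ≤ ρ' m)) ∧
      Tendsto (fun k : ℤ => dist (F f k z) (F f k x)) atBot (𝓝 0) ∧
      Tendsto (fun k : ℤ => dist (F f k z) (F f k y)) atTop (𝓝 0) := by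
    intro m
    obtain ⟨k₀, hk₀, hk₀d⟩ := hfs (δf (ρ' m)) (hδf _ (hρ'pos m)) (-(m:ℤ))
    have hj : dist (F f ((k₀-1)+1) x) (F f ((k₀-1)+1) y) ≤ δf (ρ' m) := by
      have he : k₀ - 1 + 1 = k₀ := by ring
      rw [he, dist_comm]; exact hk₀d
    obtain ⟨z, hz1, hz2, hz3, hz4⟩ := glue_shadow f (le_of_lt (hδf _ (hρ'pos m)))
      (hshad _ (hρ'pos m)) x y (k₀ - 1) hj
    exact ⟨z, ⟨k₀ - 1, by omega, hz1, hz2⟩, hz3, hz4⟩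
  choose zf hNf hzb hzt using hchoice
  have hall : ∀ m : ℕ, ∀ k : ℤ, dist (F f k (zf m)) (F f k y) ≤ ρ' m + c := by
    intro m k
    obtain ⟨N, hN, h1, h2⟩ := hNf m
    rcases le_or_gt k N with hk | hk
    · calc dist (F f k (zf m)) (F f k y)
          ≤ dist (F f k (zf m)) (F f k x) + dist (F f k x) (F f k y) := dist_triangle _ _ _
        _ ≤ ρ' m + c := add_le_add (h1 k hk) (by rw [dist_comm]; exact h k)
    · have h3 := h2 k hk; linarith
  have heq : ∀ m : ℕ, zf m = zf 0 := by
    intro m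
    apply AE_unique f hAE
    · intro k
      calc dist (F f k (zf m)) (F f k (zf 0))
          ≤ dist (F f k (zf m)) (F f k y) + dist (F f k y) (F f k (zf 0)) := dist_triangle _ _ _
        _ ≤ (ρ' m + c) + (ρ' 0 + c) := by
            refine add_le_add (hall m k) ?_
            rw [dist_comm]; exact hall 0 k
        _ ≤ ε := by have h1 := hρ'le m; have h2 := hρ'le 0; linarith
    · exact tendsto_dist_zero_trans (hzt m) ((hzt 0).congr (fun k => dist_comm _ _))
    · exact tendsto_dist_zero_trans (hzb m) ((hzb 0).congr (fun k => dist_comm _ _))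
  have hy : zf 0 = y := by
    refine eq_of_dist_eq_zero ?_
    have key : ∀ k : ℤ, dist (F f k (zf 0)) (F f k y) = 0 := by
      intro k
      have hup : ∀ᶠ m : ℕ in atTop, dist (F f k (zf 0)) (F f k y) ≤ 1/(m+1) := by
        rw [eventually_atTop]
        refine ⟨(1-k).toNat, fun m hm => ?_⟩
        obtain ⟨N, hN, h1, h2⟩ := hNf m
        have hkN : N < k := by omega
        have h3 := h2 k hkN
        rw [heq m] at h3
        exact h3.trans (hρ'le2 m)
      have h0 : dist (F f k (zf 0)) (F f k y) ≤ 0 :=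
        ge_of_tendsto tendsto_one_div_add_atTop_nhds_zero_nat hup
      exact le_antisymm h0 dist_nonneg
    have h4 := key 0
    rwa [F_zero, F_zero] at h4
  rw [← hy]
  exact hzb 0


/-- Every nonempty closed invariant set of pairs contains a pair all of whose shifts are
backward recurrent. -/
lemma exists_recurrent_pair (f : X ≃ₜ X) (S : Set (X × X)) (hne : S.Nonempty)
    (hcl : IsClosed S) (hinv : ∀ z ∈ S, ∀ k : ℤ, (F f k z.1, F f k z.2) ∈ S) :
    ∃ z ∈ S, ∀ j : ℤ, ∀ γ > (0:ℝ), ∀ R₀ : ℤ, ∃ R : ℤ, R₀ ≤ R ∧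
      dist (F f (j - R) z.1) (F f j z.1) < γ ∧ dist (F f (j - R) z.2) (F f j z.2) < γ := by
  set G : ℤ → X × X → X × X := fun k z => (F f k z.1, F f k z.2) with hG
  have hGadd : ∀ (a b : ℤ) (z : X × X), G (a + b) z = G a (G b z) := by
    intro a b z
    simp only [hG, F_add]
  have hGcont : ∀ k : ℤ, Continuous (G k) :=
    fun k => ((F_cont f k).comp continuous_fst).prodMk ((F_cont f k).comp continuous_snd)
  -- the family of candidates for Zorn
  set C : Set (Set (X × X)) :=
    {A | A.Nonempty ∧ IsClosed A ∧ A ⊆ S ∧ ∀ z ∈ A, ∀ k : ℤ, G k z ∈ A} with hC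
  have hSC : S ∈ C := ⟨hne, hcl, le_refl _, hinv⟩
  have hzorn : ∃ M ⊆ S, Minimal (fun A => A ∈ C) M := by
    apply zorn_superset_nonempty
    intro ch hchC hchain hchne
    refine ⟨⋂₀ ch, ⟨?_, ?_, ?_, ?_⟩, fun A hA => Set.sInter_subset_of_mem hA⟩
    · -- nonempty via compactness
      have : Nonempty ch := hchne.to_subtype
      have hdir : Directed (· ⊇ ·) (fun A : ch => (A : Set (X × X))) := by
        intro A B
        rcases hchain.total A.2 B.2 with hAB | hAB
        · exact ⟨A, le_refl _, hAB⟩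
        · exact ⟨B, hAB, le_refl _⟩
      have hint : (⋂ A : ch, (A : Set (X × X))).Nonempty := by
        apply IsCompact.nonempty_iInter_of_directed_nonempty_isCompact_isClosed _ hdir
        · exact fun A => (hchC A.2).1
        · exact fun A => (hchC A.2).2.1.isCompact
        · exact fun A => (hchC A.2).2.1
      rwa [Set.sInter_eq_iInter]
    · exact isClosed_sInter (fun A hA => (hchC hA).2.1)
    · obtain ⟨A, hA⟩ := hchne
      exact (Set.sInter_subset_of_mem hA).trans (hchC hA).2.2.1
    · intro z hz k
      rw [Set.mem_sInter] at hz ⊢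
      exact fun A hA => (hchC hA).2.2.2 z (hz A hA) k
    exact hSC
  obtain ⟨M, hMS, hM⟩ := hzorn
  obtain ⟨hMne, hMcl, hMsub, hMinv⟩ := hM.prop
  -- every point of M is backward recurrent
  have key : ∀ z ∈ M, ∀ γ > (0:ℝ), ∀ R₀ : ℤ, ∃ R : ℤ, R₀ ≤ R ∧ dist (G (-R) z) z < γ := by
    intro z hz
    set A : ℕ → Set (X × X) :=
      fun n => closure {w | ∃ R : ℤ, (n : ℤ) ≤ R ∧ w = G (-R) z} with hA
    have hAne : ∀ n, (A n).Nonempty :=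
      fun n => ⟨G (-(n:ℤ)) z, subset_closure ⟨(n:ℤ), le_rfl, rfl⟩⟩
    have hAsub : ∀ n, A n ⊆ M := by
      intro n
      apply closure_minimal _ hMcl
      rintro w ⟨R, hR, rfl⟩
      exact hMinv z hz (-R)
    have hAdir : Directed (· ⊇ ·) A := by
      intro m n
      refine ⟨max m n, closure_mono ?_, closure_mono ?_⟩
      · rintro w ⟨R, hR, rfl⟩
        refine ⟨R, ?_, rfl⟩
        have : (m : ℤ) ≤ (max m n : ℕ) := by exact_mod_cast le_max_left m n
        omega
      · rintro w ⟨R, hR, rfl⟩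
        refine ⟨R, ?_, rfl⟩
        have : (n : ℤ) ≤ (max m n : ℕ) := by exact_mod_cast le_max_right m n
        omega
    have hint : (⋂ n, A n).Nonempty := by
      apply IsCompact.nonempty_iInter_of_directed_nonempty_isCompact_isClosed A hAdir hAne
      · exact fun n => isClosed_closure.isCompact
      · exact fun n => isClosed_closure
    set αz := ⋂ n, A n with hαz
    have hαcl : IsClosed αz := isClosed_iInter (fun n => isClosed_closure)
    have hαsub : αz ⊆ M := (Set.iInter_subset A 0).trans (hAsub 0)
    have hαinv : ∀ w ∈ αz, ∀ k : ℤ, G k w ∈ αz := by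
      intro w hw k
      rw [Set.mem_iInter] at hw ⊢
      intro n
      rw [Metric.mem_closure_iff]
      intro η hη
      obtain ⟨η', hη', hcont⟩ := Metric.continuous_iff.mp (hGcont k) w η hη
      have hw' := hw (n + k.natAbs)
      rw [Metric.mem_closure_iff] at hw'
      obtain ⟨v, ⟨R, hR, rfl⟩, hv⟩ := hw' η' hη'
      refine ⟨G (-(R - k)) z, ⟨R - k, by omega, rfl⟩, ?_⟩
      have h2 : G (-(R - k)) z = G k (G (-R) z) := by
        rw [← hGadd]; congr 1; omega
      rw [h2]
      rw [dist_comm] at hv ⊢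
      exact hcont _ hv
    have hMα : M ⊆ αz := hM.le_of_le ⟨hint, hαcl, hαsub.trans hMsub, hαinv⟩ hαsub
    have hzα := hMα hz
    intro γ hγ R₀
    rw [Set.mem_iInter] at hzα
    have h3 := hzα R₀.toNat
    rw [Metric.mem_closure_iff] at h3
    obtain ⟨v, ⟨R, hR, rfl⟩, hv⟩ := h3 γ hγ
    refine ⟨R, by omega, ?_⟩
    rwa [dist_comm] at hv
  obtain ⟨z₀, hz₀⟩ := hMne
  refine ⟨z₀, hMsub hz₀, fun j γ hγ R₀ => ?_⟩
  obtain ⟨R, hR, hd⟩ := key (G j z₀) (hMinv z₀ hz₀ j) γ hγ R₀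
  have h4 : G (-R) (G j z₀) = G (j - R) z₀ := by
    rw [← hGadd]; congr 1; omega
  rw [h4, Prod.dist_eq] at hd
  have hd1 := lt_of_le_of_lt (le_max_left _ _) hd
  have hd2 := lt_of_le_of_lt (le_max_right _ _) hd
  exact ⟨R, hR, hd1, hd2⟩


/-- Extraction of a uniformly separated orbit pair from a wall. -/
lemma exists_wall_pair (f : X ≃ₜ X) {x y : X} {c γ : ℝ}
    (t : ℕ → ℤ)
    (h : ∀ k : ℤ, dist (F f k y) (F f k x) ≤ c)
    (hlow : ∀ m : ℤ, ∀ᶠ i : ℕ in atTop, γ ≤ dist (F f (m + t i) y) (F f (m + t i) x)) :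
    ∃ p q : X, (∀ m : ℤ, dist (F f m q) (F f m p) ≤ c) ∧
      (∀ m : ℤ, γ ≤ dist (F f m q) (F f m p)) := by
  obtain ⟨p, -, φ, hφ, hp⟩ := IsCompact.tendsto_subseq
    (x := fun i => F f (t i) x) isCompact_univ (fun _ => Set.mem_univ _)
  obtain ⟨q, -, ψ, hψ, hq⟩ := IsCompact.tendsto_subseq
    (x := fun i => F f (t (φ i)) y) isCompact_univ (fun _ => Set.mem_univ _)
  set s : ℕ → ℕ := fun i => φ (ψ i) with hs
  have hp2 : Tendsto (fun i => F f (t (s i)) x) atTop (𝓝 p) := hp.comp hψ.tendsto_atTop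
  have hq2 : Tendsto (fun i => F f (t (s i)) y) atTop (𝓝 q) := hq
  have hconv : ∀ m : ℤ, Tendsto
      (fun i => dist (F f (m + t (s i)) y) (F f (m + t (s i)) x)) atTop
      (𝓝 (dist (F f m q) (F f m p))) := by
    intro m
    have h1 : Tendsto (fun i => F f m (F f (t (s i)) y)) atTop (𝓝 (F f m q)) :=
      ((F_cont f m).tendsto q).comp hq2
    have h2 : Tendsto (fun i => F f m (F f (t (s i)) x)) atTop (𝓝 (F f m p)) :=
      ((F_cont f m).tendsto p).comp hp2
    have h3 := h1.dist h2
    apply h3.congr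
    intro i
    rw [← F_add, ← F_add]
  refine ⟨p, q, fun m => ?_, fun m => ?_⟩
  · exact le_of_tendsto (hconv m) (Eventually.of_forall fun i => h _)
  · apply ge_of_tendsto (hconv m)
    have hst : Tendsto s atTop atTop := (hφ.comp hψ).tendsto_atTop
    exact hst.eventually (hlow m)

/-- The key contradiction: there is no recurrent pair whose orbits stay uniformly close
but uniformly separated, under L-shadowing and asymptotic expansiveness. -/
lemma wall_kill (f : X ≃ₜ X) {ε : ℝ} (hε : 0 < ε)
    (hAE : ∀ x : X, Vs f ε x ∩ Vu f ε x = {x})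
    (δf : ℝ → ℝ) (hδf : ∀ ρ, 0 < ρ → 0 < δf ρ)
    (hshad : ∀ ρ, 0 < ρ → ∀ w : ℤ → X, IsLimitPseudoOrbit (F f) (δf ρ) w →
      ∃ z, LimitShadows (F f) ρ w z)
    {c b : ℝ} (hc : 0 < c) (hcδ : c ≤ δf (ε/8)) (hcε : c ≤ ε/8)
    {p q : X}
    (hup : ∀ m : ℤ, dist (F f m q) (F f m p) ≤ c)
    (hlow : ∀ m : ℤ, b ≤ dist (F f m q) (F f m p))
    (hb : 0 < b)
    (hrec : ∀ j : ℤ, ∀ γ > (0:ℝ), ∀ R₀ : ℤ, ∃ R : ℤ, R₀ ≤ R ∧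
      dist (F f (j - R) p) (F f j p) < γ ∧ dist (F f (j - R) q) (F f j q) < γ) :
    False := by
  have hρ₁ : (0:ℝ) < ε/8 := by linarith
  -- the heteroclinic w from p to q
  obtain ⟨w, hw1, hw2, hw3, hw4⟩ := glue_shadow f (le_of_lt (hδf _ hρ₁)) (hshad _ hρ₁) p q 0
    (by rw [dist_comm]; exact (hup 1).trans hcδ)
  -- the heteroclinic w' from q to p
  obtain ⟨w', hw'1, hw'2, hw'3, hw'4⟩ := glue_shadow f (le_of_lt (hδf _ hρ₁)) (hshad _ hρ₁) q p 0
    ((hup 1).trans hcδ)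
  -- tube bounds
  have hwp : ∀ k : ℤ, dist (F f k w) (F f k p) ≤ ε/8 + c := by
    intro k
    rcases le_or_gt k 0 with hk | hk
    · have := hw1 k hk; linarith
    · calc dist (F f k w) (F f k p)
          ≤ dist (F f k w) (F f k q) + dist (F f k q) (F f k p) := dist_triangle _ _ _
        _ ≤ ε/8 + c := add_le_add (hw2 k hk) (hup k)
  have hw'p : ∀ k : ℤ, dist (F f k w') (F f k p) ≤ ε/8 + c := by
    intro k
    rcases le_or_gt k 0 with hk | hk
    · calc dist (F f k w') (F f k p)
          ≤ dist (F f k w') (F f k q) + dist (F f k q) (F f k p) := dist_triangle _ _ _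
        _ ≤ ε/8 + c := add_le_add (hw'1 k hk) (hup k)
    · have := hw'2 k hk; linarith
  -- the comparison precision
  set ρ₂ : ℝ := min (b/4) (ε/4) with hρ₂def
  have hρ₂pos : 0 < ρ₂ := lt_min (by linarith) (by linarith)
  have hρ₂b : ρ₂ ≤ b/4 := min_le_left _ _
  have hρ₂ε : ρ₂ ≤ ε/4 := min_le_right _ _
  set δ₂ : ℝ := δf ρ₂ with hδ₂def
  have hδ₂pos : 0 < δ₂ := hδf _ hρ₂pos
  -- choose the cut times
  obtain ⟨B, hB⟩ := eventually_atTop.mp (ev_le_of_tendsto_zero hw4 hδ₂pos)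
  set Cc : ℤ := B + 1 with hCdef
  obtain ⟨N₂, hN₂⟩ := eventually_atBot.mp (ev_le_of_tendsto_zero hw'3 (by linarith : (0:ℝ) < δ₂/2))
  obtain ⟨N₃, hN₃⟩ := eventually_atTop.mp (ev_le_of_tendsto_zero hw'4 hδ₂pos)
  obtain ⟨R, hR, hRp, hRq⟩ := hrec (Cc + 1) (δ₂/2) (by linarith) (max (Cc + 1 - N₂) (Cc + 1))
  have hRN₂ : Cc + 1 - R ≤ N₂ := by
    have := le_max_left (Cc + 1 - N₂) (Cc + 1); omega
  have hRC : Cc + 1 ≤ R := by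
    have := le_max_right (Cc + 1 - N₂) (Cc + 1); omega
  set D : ℤ := R + max N₃ 0 with hDdef
  have hCD : Cc + 1 ≤ D := by
    have := le_max_right N₃ (0:ℤ); omega
  have hDN₃ : N₃ ≤ D + 1 - R := by
    have := le_max_left N₃ (0:ℤ); omega
  -- the two pseudo-orbits
  set Z : ℤ → X := fun k =>
    if k ≤ B then F f k w else if k ≤ Cc then F f k q
    else if k ≤ D then F f (k - R) w' else F f (k - R) p with hZdef
  set Z' : ℤ → X := fun k => if k ≤ Cc then F f k p else F f (k - R) p with hZ'def
  have hZ1 : ∀ k : ℤ, k ≤ B → Z k = F f k w := fun k hk => if_pos hk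
  have hZ2 : ∀ k : ℤ, B < k → k ≤ Cc → Z k = F f k q := fun k hk hk' => by
    simp only [hZdef]; rw [if_neg (by omega), if_pos hk']
  have hZ3 : ∀ k : ℤ, Cc < k → k ≤ D → Z k = F f (k - R) w' := fun k hk hk' => by
    simp only [hZdef]; rw [if_neg (by omega), if_neg (by omega), if_pos hk']
  have hZ4 : ∀ k : ℤ, D < k → Z k = F f (k - R) p := fun k hk => by
    simp only [hZdef]; rw [if_neg (by omega), if_neg (by omega), if_neg (by omega)]
  have hZ'1 : ∀ k : ℤ, k ≤ Cc → Z' k = F f k p := fun k hk => if_pos hk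
  have hZ'2 : ∀ k : ℤ, Cc < k → Z' k = F f (k - R) p := fun k hk => if_neg (by omega)
  -- jumps of Z
  have hZjump0 : ∀ k : ℤ, k ≠ B → k ≠ Cc → k ≠ D → dist (F f 1 (Z k)) (Z (k+1)) = 0 := by
    intro k hkB hkC hkD
    rcases lt_trichotomy k B with hk | hk | hk
    · rw [hZ1 k (by omega), hZ1 (k+1) (by omega), F_succ, dist_self]
    · omega
    · rcases lt_trichotomy k Cc with hk2 | hk2 | hk2
      · -- B < k < Cc : impossible since Cc = B + 1
        omega
      · omega
      · rcases lt_trichotomy k D with hk3 | hk3 | hk3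
        · rw [hZ3 k (by omega) (by omega), hZ3 (k+1) (by omega) (by omega), F_succ]
          have he : k - R + 1 = k + 1 - R := by ring
          rw [he, dist_self]
        · omega
        · rw [hZ4 k (by omega), hZ4 (k+1) (by omega), F_succ]
          have he : k - R + 1 = k + 1 - R := by ring
          rw [he, dist_self]
  have hZpo : IsLimitPseudoOrbit (F f) δ₂ Z := by
    constructor
    · intro k
      by_cases hkB : k = B
      · rw [hkB, hZ1 B le_rfl, hZ2 (B+1) (by omega) (by omega), F_succ]
        exact hB (B+1) (by omega)
      · by_cases hkC : k = Cc
        · rw [hkC, hZ2 Cc (by omega) le_rfl, hZ3 (Cc+1) (by omega) (by omega), F_succ]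
          calc dist (F f (Cc+1) q) (F f (Cc+1-R) w')
              ≤ dist (F f (Cc+1) q) (F f (Cc+1-R) q) + dist (F f (Cc+1-R) q) (F f (Cc+1-R) w') :=
                dist_triangle _ _ _
            _ ≤ δ₂/2 + δ₂/2 := by
                refine add_le_add ?_ ?_
                · rw [dist_comm]
                  exact le_of_lt hRq
                · rw [dist_comm]
                  exact hN₂ (Cc+1-R) (by omega)
            _ = δ₂ := by ring
        · by_cases hkD : k = D
          · rw [hkD, hZ3 D (by omega) le_rfl, hZ4 (D+1) (by omega), F_succ]
            have he : D - R + 1 = D + 1 - R := by ring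
            rw [he]
            exact hN₃ (D+1-R) (by omega)
          · rw [hZjump0 k hkB hkC hkD]
            exact le_of_lt hδ₂pos
    · have hev : ∀ᶠ k in cocompact ℤ, dist (F f 1 (Z k)) (Z (k+1)) = 0 := by
        have hfin : ({B, Cc, D} : Set ℤ).Finite := Set.toFinite _
        filter_upwards [hfin.isCompact.compl_mem_cocompact] with k hk
        simp only [Set.mem_compl_iff, Set.mem_insert_iff, Set.mem_singleton_iff, not_or] at hk
        exact hZjump0 k hk.1 hk.2.1 hk.2.2
      exact Tendsto.congr' (hev.mono fun k hk => hk.symm) tendsto_const_nhds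
  have hZ'po : IsLimitPseudoOrbit (F f) δ₂ Z' := by
    constructor
    · intro k
      by_cases hkC : k = Cc
      · rw [hkC, hZ'1 Cc le_rfl, hZ'2 (Cc+1) (by omega), F_succ]
        calc dist (F f (Cc+1) p) (F f (Cc+1-R) p) = dist (F f (Cc+1-R) p) (F f (Cc+1) p) :=
              dist_comm _ _
          _ ≤ δ₂ := le_of_lt (by linarith [hRp])
      · rcases lt_or_gt_of_ne hkC with hk | hk
        · rw [hZ'1 k (by omega), hZ'1 (k+1) (by omega), F_succ, dist_self]
          exact le_of_lt hδ₂pos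
        · rw [hZ'2 k (by omega), hZ'2 (k+1) (by omega), F_succ]
          have he : k - R + 1 = k + 1 - R := by ring
          rw [he, dist_self]
          exact le_of_lt hδ₂pos
    · have hev : ∀ᶠ k in cocompact ℤ, dist (F f 1 (Z' k)) (Z' (k+1)) = 0 := by
        have hfin : ({Cc} : Set ℤ).Finite := Set.finite_singleton _
        filter_upwards [hfin.isCompact.compl_mem_cocompact] with k hk
        simp only [Set.mem_compl_iff, Set.mem_singleton_iff] at hk
        rcases lt_or_gt_of_ne hk with hk' | hk'
        · rw [hZ'1 k (by omega), hZ'1 (k+1) (by omega), F_succ, dist_self]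
        · rw [hZ'2 k (by omega), hZ'2 (k+1) (by omega), F_succ]
          have he : k - R + 1 = k + 1 - R := by ring
          rw [he, dist_self]
      exact Tendsto.congr' (hev.mono fun k hk => hk.symm) tendsto_const_nhds
  obtain ⟨z, hzs, hzl⟩ := hshad _ hρ₂pos Z hZpo
  obtain ⟨z', hz's, hz'l⟩ := hshad _ hρ₂pos Z' hZ'po
  -- distance between the two pseudo-orbits
  have hZZ' : ∀ k : ℤ, dist (Z k) (Z' k) ≤ ε/8 + c := by
    intro k
    rcases le_or_gt k B with hk | hk
    · rw [hZ1 k hk, hZ'1 k (by omega)]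
      exact hwp k
    · rcases le_or_gt k Cc with hk2 | hk2
      · rw [hZ2 k hk hk2, hZ'1 k hk2]
        exact (hup k).trans (by linarith)
      · rcases le_or_gt k D with hk3 | hk3
        · rw [hZ3 k hk2 hk3, hZ'2 k hk2]
          exact hw'p (k - R)
        · rw [hZ4 k hk3, hZ'2 k hk2, dist_self]
          positivity
  have hZZ'bot : Tendsto (fun k : ℤ => dist (Z k) (Z' k)) atBot (𝓝 0) := by
    apply Tendsto.congr' _ hw3
    filter_upwards [eventually_le_atBot (min B Cc)] with k hk
    rw [hZ1 k (by omega), hZ'1 k (by omega)]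
  have hZZ'top : Tendsto (fun k : ℤ => dist (Z k) (Z' k)) atTop (𝓝 0) := by
    apply Tendsto.congr' _ tendsto_const_nhds
    filter_upwards [eventually_gt_atTop (max D Cc)] with k hk
    rw [hZ4 k (by omega), hZ'2 k (by omega), dist_self]
  -- the two shadows coincide
  have hzz' : z = z' := by
    apply AE_unique f hAE
    · intro k
      calc dist (F f k z) (F f k z')
          ≤ dist (F f k z) (Z k) + dist (Z k) (Z' k) + dist (Z' k) (F f k z') :=
            dist_triangle4 _ _ _ _
        _ ≤ ρ₂ + (ε/8 + c) + ρ₂ := by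
            refine add_le_add (add_le_add (hzs k) (hZZ' k)) ?_
            rw [dist_comm]; exact hz's k
        _ ≤ ε := by linarith
    · apply tendsto_dist_zero_trans (hzl.mono_left atTop_le_cocompact)
      apply tendsto_dist_zero_trans hZZ'top
      exact ((hz'l.mono_left atTop_le_cocompact).congr (fun k => dist_comm _ _))
    · apply tendsto_dist_zero_trans (hzl.mono_left atBot_le_cocompact)
      apply tendsto_dist_zero_trans hZZ'bot
      exact ((hz'l.mono_left atBot_le_cocompact).congr (fun k => dist_comm _ _))
  -- contradiction at time Cc
  have hfinal : dist (F f Cc q) (F f Cc p) ≤ 2 * ρ₂ := by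
    have h1 : dist (F f Cc z) (F f Cc q) ≤ ρ₂ := by
      have := hzs Cc
      rwa [hZ2 Cc (by omega) le_rfl] at this
    have h2 : dist (F f Cc z) (F f Cc p) ≤ ρ₂ := by
      have := hz's Cc
      rw [hZ'1 Cc le_rfl] at this
      rwa [hzz']
    calc dist (F f Cc q) (F f Cc p)
        ≤ dist (F f Cc q) (F f Cc z) + dist (F f Cc z) (F f Cc p) := dist_triangle _ _ _
      _ ≤ ρ₂ + ρ₂ := add_le_add (by rw [dist_comm]; exact h1) h2
      _ = 2 * ρ₂ := by ring
  have := hlow Cc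
  have : b ≤ 2 * (b/4) := le_trans this (hfinal.trans (by linarith))
  linarith

/-- Under L-shadowing, asymptotic expansiveness implies expansiveness. -/
lemma AE_to_E (f : X ≃ₜ X)
    (hL : LShadowing (F f)) {ε : ℝ} (hε : 0 < ε)
    (hAE : ∀ x : X, Vs f ε x ∩ Vu f ε x = {x}) :
    ∃ c > (0:ℝ), ∀ x : X, Ws f c x ∩ Wu f c x = {x} := by
  choose! δf hδf hshad using hL
  set c := min (δf (ε/8)) (ε/8) with hcdef
  have hc0 : 0 < c := lt_min (hδf _ (by linarith)) (by linarith)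
  have hcδ : c ≤ δf (ε/8) := min_le_left _ _
  have hcε : c ≤ ε/8 := min_le_right _ _
  refine ⟨c, hc0, fun x => ?_⟩
  apply Set.eq_singleton_iff_unique_mem.mpr
  constructor
  · exact ⟨fun k _ => by simp [dist_self, hc0.le], fun k _ => by simp [dist_self, hc0.le]⟩
  · rintro y ⟨hys, hyu⟩
    have h : ∀ k : ℤ, dist (F f k y) (F f k x) ≤ c := fun k => by
      rcases le_total 0 k with hk | hk
      · exact hys k hk
      · exact hyu k hk
    have noWall : ∀ γ : ℝ, 0 < γ →
        (∃ p q' : X, (∀ m : ℤ, dist (F f m q') (F f m p) ≤ c) ∧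
          (∀ m : ℤ, γ ≤ dist (F f m q') (F f m p))) → False := by
      rintro γ hγ ⟨p0, q0, hup0, hlow0⟩
      set S : Set (X × X) := {z | (∀ m : ℤ, dist (F f m z.2) (F f m z.1) ≤ c) ∧
        (∀ m : ℤ, γ ≤ dist (F f m z.2) (F f m z.1))} with hSdef
      have hSne : S.Nonempty := ⟨(p0, q0), hup0, hlow0⟩
      have hScl : IsClosed S := by
        have h1 : IsClosed (⋂ m : ℤ, {z : X × X | dist (F f m z.2) (F f m z.1) ≤ c}) :=
          isClosed_iInter (fun m => isClosed_le
            (Continuous.dist ((F_cont f m).comp continuous_snd)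
              ((F_cont f m).comp continuous_fst)) continuous_const)
        have h2 : IsClosed (⋂ m : ℤ, {z : X × X | γ ≤ dist (F f m z.2) (F f m z.1)}) :=
          isClosed_iInter (fun m => isClosed_le continuous_const
            (Continuous.dist ((F_cont f m).comp continuous_snd)
              ((F_cont f m).comp continuous_fst)))
        have heq : S = (⋂ m : ℤ, {z : X × X | dist (F f m z.2) (F f m z.1) ≤ c}) ∩
            (⋂ m : ℤ, {z : X × X | γ ≤ dist (F f m z.2) (F f m z.1)}) := by
          ext z
          simp only [hSdef, Set.mem_setOf_eq, Set.mem_inter_iff, Set.mem_iInter]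
        rw [heq]
        exact h1.inter h2
      have hSinv : ∀ z ∈ S, ∀ k : ℤ, (F f k z.1, F f k z.2) ∈ S := by
        rintro z ⟨h1, h2⟩ k
        constructor <;> intro m
        · rw [← F_add, ← F_add]; exact h1 (m + k)
        · rw [← F_add, ← F_add]; exact h2 (m + k)
      obtain ⟨z₀, hz₀S, hrec⟩ := exists_recurrent_pair f S hSne hScl hSinv
      exact wall_kill f hε hAE δf hδf hshad hc0 hcδ hcε hz₀S.1 hz₀S.2 hγ hrec
    have hWsA : Tendsto (fun k : ℤ => dist (F f k y) (F f k x)) atTop (𝓝 0) := by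
      by_cases hfs : ∀ γ, 0 < γ → ∀ K : ℤ, ∃ k : ℤ, K ≤ k ∧ dist (F f k y) (F f k x) ≤ γ
      · exact asymp_of_freq_small_top f hε hAE δf hδf hshad hc0 hcε h hfs
      · exfalso
        push_neg at hfs
        obtain ⟨γ, hγ, K, hK⟩ := hfs
        apply noWall γ hγ
        apply exists_wall_pair f (fun i => K + (i:ℤ)) h
        intro m
        rw [eventually_atTop]
        refine ⟨(-m).toNat, fun i hi => ?_⟩
        exact le_of_lt (hK (m + (K + (i:ℤ))) (by omega))
    have hWuA : Tendsto (fun k : ℤ => dist (F f k y) (F f k x)) atBot (𝓝 0) := by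
      by_cases hfs : ∀ γ, 0 < γ → ∀ K : ℤ, ∃ k : ℤ, k ≤ K ∧ dist (F f k y) (F f k x) ≤ γ
      · exact asymp_of_freq_small_bot f hε hAE δf hδf hshad hc0 hcε h hfs
      · exfalso
        push_neg at hfs
        obtain ⟨γ, hγ, K, hK⟩ := hfs
        apply noWall γ hγ
        apply exists_wall_pair f (fun i => K - (i:ℤ)) h
        intro m
        rw [eventually_atTop]
        refine ⟨m.toNat, fun i hi => ?_⟩
        exact le_of_lt (hK (m + (K - (i:ℤ))) (by omega))
    have hmem : y ∈ Vs f ε x ∩ Vu f ε x :=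
      ⟨⟨hWsA, fun k _ => (h k).trans (by linarith)⟩,
       ⟨hWuA, fun k _ => (h k).trans (by linarith)⟩⟩
    rw [hAE x] at hmem
    exact hmem

end Aux

end LS

/-- under L-shadowing, expansiveness and asymptotic expansiveness are
equivalent; and a homeomorphism with shadowing and an expansive non-wandering set
which is not expansive is neither asymptotically expansive nor has uniform
contractions. -/
theorem stmt_16 {X : Type*} [MetricSpace X] [CompactSpace X] (f : X ≃ₜ X) :
    (LS.LShadowing (LS.F f) →
      ((∃ c > (0:ℝ), ∀ x : X, LS.Ws f c x ∩ LS.Wu f c x = {x}) ↔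
        (∃ ε > (0:ℝ), ∀ x : X, LS.Vs f ε x ∩ LS.Vu f ε x = {x}))) ∧
    ((LS.Shadowing (LS.F f) ∧
      (∃ c > (0:ℝ), ∀ x ∈ LS.Omega f, ∀ y ∈ LS.Omega f,
        (∀ k : ℤ, dist (LS.F f k y) (LS.F f k x) ≤ c) → y = x) ∧
      ¬ (∃ c > (0:ℝ), ∀ x : X, LS.Ws f c x ∩ LS.Wu f c x = {x})) →
      (¬ (∃ ε > (0:ℝ), ∀ x : X, LS.Vs f ε x ∩ LS.Vu f ε x = {x}) ∧
        ¬ LS.UnifContr f)) := by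
  constructor
  · intro hLSh
    constructor
    · rintro ⟨c, hc, hE⟩
      refine ⟨c, hc, fun x => ?_⟩
      apply Set.eq_singleton_iff_unique_mem.mpr
      refine ⟨LS.mem_self_VsVu f hc.le x, ?_⟩
      rintro y ⟨⟨-, hys⟩, ⟨-, hyu⟩⟩
      have hmem : y ∈ LS.Ws f c x ∩ LS.Wu f c x := ⟨hys, hyu⟩
      rw [hE x] at hmem
      exact hmem
    · rintro ⟨ε, hε, hAE⟩
      exact LS.AE_to_E f hLSh hε (fun x => hAE x)
  · rintro ⟨hS, ⟨c₀, hc₀, hEΩ⟩, hNE⟩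
    constructor
    · rintro ⟨ε, hε, hAE⟩
      apply hNE
      refine ⟨min ε c₀, lt_min hε hc₀, fun x => ?_⟩
      apply Set.eq_singleton_iff_unique_mem.mpr
      refine ⟨LS.mem_self_WsWu f (lt_min hε hc₀).le x, ?_⟩
      rintro y ⟨hys, hyu⟩
      have hall : ∀ k : ℤ, dist (LS.F f k y) (LS.F f k x) ≤ min ε c₀ := fun k => by
        rcases le_total 0 k with hk | hk
        · exact hys k hk
        · exact hyu k hk
      have hall' : ∀ k : ℤ, dist (LS.F f k y) (LS.F f k x) ≤ c₀ :=
        fun k => (hall k).trans (min_le_right _ _)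
      have hA := LS.orbitdist_tendsto_atTop f le_rfl hall' hEΩ
      have hB := LS.orbitdist_tendsto_atBot f le_rfl hall' hEΩ
      have hmem : y ∈ LS.Vs f ε x ∩ LS.Vu f ε x :=
        ⟨⟨hA, fun k _ => (hall k).trans (min_le_left _ _)⟩,
         ⟨hB, fun k _ => (hall k).trans (min_le_left _ _)⟩⟩
      rw [hAE x] at hmem
      exact hmem
    · intro hUC
      exact hNE (LS.E_of_UnifContr f hUC)
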